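/- Let R be a Prüfer domain and M a branched maximal ideal that is not divisorial. Then M is not sharp if and only if no M-primary ideal of R is divisorial, if and only if (R:Q) = R for every M-primary ideal Q. -/

import Mathlib

/-- An ideal is divisorial if `I = (R : (R : I))`, phrased via fractional ideals. -/
def IsDivisorial (R : Type*) [CommRing R] [IsDomain R] (I : Ideal R) : Prop :=
  (1 / (1 / (I : FractionalIdeal (nonZeroDivisors R) (FractionRing R))) :
    FractionalIdeal (nonZeroDivisors R) (FractionRing R))
    = (I : FractionalIdeal (nonZeroDivisors R) (FractionRing R))

/-- An ideal is invertible if it is a unit as a fractional ideal. -/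
def IsInvertibleIdeal (R : Type*) [CommRing R] [IsDomain R] (I : Ideal R) : Prop :=
  IsUnit (I : FractionalIdeal (nonZeroDivisors R) (FractionRing R))

/-- A Prüfer domain: every nonzero finitely generated ideal is invertible. -/
def IsPrufer (R : Type*) [CommRing R] [IsDomain R] : Prop :=
  ∀ I : Ideal R, I ≠ ⊥ → I.FG → IsInvertibleIdeal R I

/-- A prime `P` is sharp if it contains a finitely generated ideal contained
only in the maximal ideals that contain `P`. -/
def IsSharp (R : Type*) [CommRing R] (P : Ideal R) : Prop :=
  ∃ I : Ideal R, I.FG ∧ I ≤ P ∧ ∀ M : Ideal R, M.IsMaximal → I ≤ M → P ≤ M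

section Aux

variable {R : Type*} [CommRing R] [IsDomain R]

open FractionalIdeal

local notation "K" => FractionRing R
local notation "inj" => IsFractionRing.injective R (FractionRing R)

/-- The fundamental "u + v = 1" lemma in Prüfer domains, extracted from
invertibility of the two-generated ideal `(a, b)`. -/
theorem prufer_pair (hR : IsPrufer R) (a b : R) (hab : a ≠ 0 ∨ b ≠ 0) :
    ∃ u v s t : R, u + v = 1 ∧ u * b = t * a ∧ v * a = s * b := by
  set G : Ideal R := Ideal.span {a, b} with hG
  have hGbot : G ≠ ⊥ := by
    intro h
    rcases hab with h' | h'
    · exact h' ((Submodule.eq_bot_iff _).mp h a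
        (Ideal.subset_span (by simp)))
    · exact h' ((Submodule.eq_bot_iff _).mp h b
        (Ideal.subset_span (by simp)))
  have hGfg : G.FG := Submodule.fg_span (Set.toFinite _)
  have hGu : IsUnit (G : FractionalIdeal (nonZeroDivisors R) K) := hR G hGbot hGfg
  have hmul : (G : FractionalIdeal (nonZeroDivisors R) K) * (G : FractionalIdeal _ K)⁻¹ = 1 :=
    (mul_inv_cancel_iff_isUnit K).mpr hGu
  -- decompose G as span a ⊔ span b
  have hGsplit : (G : FractionalIdeal (nonZeroDivisors R) K)
      = spanSingleton (nonZeroDivisors R) (algebraMap R K a)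
        + spanSingleton (nonZeroDivisors R) (algebraMap R K b) := by
    rw [hG, Ideal.span_insert, coeIdeal_sup, coeIdeal_span_singleton,
      Ideal.span_singleton_eq_span_singleton.mpr (by rfl), coeIdeal_span_singleton]
  have h1 : (1 : K) ∈ ((1 : FractionalIdeal (nonZeroDivisors R) K)) := one_mem_one _
  rw [← hmul, hGsplit, add_mul] at h1
  rcases (Submodule.mem_sup).mp h1 with ⟨y, hy, z, hz, hyz⟩
  rw [← hGsplit] at hy hz
  rcases mem_singleton_mul.mp hy with ⟨t₁, ht₁, hyt⟩
  rcases mem_singleton_mul.mp hz with ⟨t₂, ht₂, hzt⟩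
  have hGne : (G : FractionalIdeal (nonZeroDivisors R) K) ≠ 0 := coeIdeal_ne_zero.mpr hGbot
  have haG : algebraMap R K a ∈ (G : FractionalIdeal (nonZeroDivisors R) K) :=
    mem_coeIdeal _ |>.mpr ⟨a, Ideal.subset_span (by simp), rfl⟩
  have hbG : algebraMap R K b ∈ (G : FractionalIdeal (nonZeroDivisors R) K) :=
    mem_coeIdeal _ |>.mpr ⟨b, Ideal.subset_span (by simp), rfl⟩
  have h1a : t₁ * algebraMap R K a ∈ (1 : FractionalIdeal (nonZeroDivisors R) K) :=
    (mem_inv_iff hGne).mp ht₁ _ haG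
  have h1b : t₁ * algebraMap R K b ∈ (1 : FractionalIdeal (nonZeroDivisors R) K) :=
    (mem_inv_iff hGne).mp ht₁ _ hbG
  have h2a : t₂ * algebraMap R K a ∈ (1 : FractionalIdeal (nonZeroDivisors R) K) :=
    (mem_inv_iff hGne).mp ht₂ _ haG
  have h2b : t₂ * algebraMap R K b ∈ (1 : FractionalIdeal (nonZeroDivisors R) K) :=
    (mem_inv_iff hGne).mp ht₂ _ hbG
  rcases mem_one_iff _ |>.mp h1a with ⟨u, hu⟩
  rcases mem_one_iff _ |>.mp h2b with ⟨v, hv⟩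
  rcases mem_one_iff _ |>.mp h1b with ⟨t, ht⟩
  rcases mem_one_iff _ |>.mp h2a with ⟨s, hs⟩
  refine ⟨u, v, s, t, ?_, ?_, ?_⟩
  · apply inj
    rw [_root_.map_add, _root_.map_one, hu, hv, ← hyz, hyt, hzt]; ring
  · apply inj
    rw [_root_.map_mul, _root_.map_mul, hu, ht]; ring
  · apply inj
    rw [_root_.map_mul, _root_.map_mul, hv, hs]; ring

/-- A prime properly below a maximal `M` is contained in every `M`-primary ideal. -/
theorem prime_le_primary (hR : IsPrufer R) {M P Q : Ideal R} (hM : M.IsMaximal)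
    (hP : P.IsPrime) (hPM : P ≤ M) (hPne : P ≠ M)
    (hQ : Q.IsPrimary) (hQr : Q.radical = M) : P ≤ Q := by
  have hQP : ¬ Q ≤ P := by
    intro h
    have : M ≤ P := by
      rw [← hQr]
      calc Q.radical ≤ P.radical := Ideal.radical_mono h
        _ = P := hP.radical
    exact hPne (le_antisymm hPM this)
  rcases Set.not_subset.mp hQP with ⟨q, hqQ, hqP⟩
  intro p hp
  have hq0 : q ≠ 0 := fun h => hqP (h ▸ P.zero_mem)
  obtain ⟨u, v, s, t, huv, hub, hva⟩ := prufer_pair hR q p (Or.inl hq0)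
  by_cases hv : v ∈ M
  · have hu : u ∉ M := fun hu =>
      hM.ne_top ((Ideal.eq_top_iff_one M).mpr (huv ▸ M.add_mem hu hv))
    have hupQ : p * u ∈ Q := by
      rw [mul_comm, hub]
      exact Q.mul_mem_left t hqQ
    rcases (Ideal.isPrimary_iff.mp hQ).2 hupQ with h | h
    · exact h
    · rw [hQr] at h; exact absurd h hu
  · have hvP : v ∉ P := fun h => hv (hPM h)
    have : v * q ∈ P := by rw [hva]; exact P.mul_mem_left s hp
    rcases hP.mem_or_mem this with h | h
    · exact absurd h hvP
    · exact absurd h hqP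

/-- Primes below a maximal ideal of a Prüfer domain are comparable. -/
theorem primes_comparable (hR : IsPrufer R) {M P₁ P₂ : Ideal R} (hM : M.IsMaximal)
    (h₁ : P₁.IsPrime) (h₂ : P₂.IsPrime) (l₁ : P₁ ≤ M) (l₂ : P₂ ≤ M) :
    P₁ ≤ P₂ ∨ P₂ ≤ P₁ := by
  by_contra h
  push_neg at h
  obtain ⟨hn₁, hn₂⟩ := h
  rcases Set.not_subset.mp hn₁ with ⟨p₁, hp₁, hp₁'⟩
  rcases Set.not_subset.mp hn₂ with ⟨p₂, hp₂, hp₂'⟩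
  have h0 : p₁ ≠ 0 := fun h => hp₁' (h ▸ P₂.zero_mem)
  obtain ⟨u, v, s, t, huv, hub, hva⟩ := prufer_pair hR p₁ p₂ (Or.inl h0)
  have : u ∉ M ∨ v ∉ M := by
    by_contra h
    push_neg at h
    exact hM.ne_top (Ideal.eq_top_iff_one _ |>.mpr (huv ▸ M.add_mem h.1 h.2))
  rcases this with hu | hv
  · have : u * p₂ ∈ P₁ := by rw [hub]; exact P₁.mul_mem_left t hp₁
    rcases h₁.mem_or_mem this with h | h
    · exact hu (l₁ h)
    · exact hp₂' h
  · have : v * p₁ ∈ P₂ := by rw [hva]; exact P₂.mul_mem_left s hp₂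
    rcases h₂.mem_or_mem this with h | h
    · exact hv (l₂ h)
    · exact hp₁' h

/-- In a Prüfer domain, if `M` is branched (possesses a primary ideal `Q₀ ≠ M`), then there is
an element of `Q₀` lying outside every prime properly contained in `M`. -/
theorem exists_good_elt (hR : IsPrufer R) {M Q₀ : Ideal R} (hM : M.IsMaximal)
    (hQ₀ : Q₀.IsPrimary) (hr : Q₀.radical = M) (hne : Q₀ ≠ M) :
    ∃ x : R, x ≠ 0 ∧ x ∈ Q₀ ∧ ∀ P : Ideal R, P.IsPrime → P ≤ M → x ∈ P → P = M := by
  have hMbot : M ≠ ⊥ := by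
    intro h
    apply hne
    have : Q₀ ≤ M := hr ▸ Ideal.le_radical
    rw [h] at this ⊢
    exact le_bot_iff.mp this
  -- the union of all primes strictly below M
  let U : Ideal R :=
    { carrier := {x | ∃ P : Ideal R, P.IsPrime ∧ P ≤ M ∧ P ≠ M ∧ x ∈ P}
      zero_mem' := ⟨⊥, Ideal.bot_prime, bot_le, fun h => hMbot h.symm, Submodule.zero_mem _⟩
      add_mem' := by
        rintro x y ⟨P₁, hP₁, hl₁, hne₁, hx⟩ ⟨P₂, hP₂, hl₂, hne₂, hy⟩
        rcases primes_comparable hR hM hP₁ hP₂ hl₁ hl₂ with h | h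
        · exact ⟨P₂, hP₂, hl₂, hne₂, P₂.add_mem (h hx) hy⟩
        · exact ⟨P₁, hP₁, hl₁, hne₁, P₁.add_mem hx (h hy)⟩
      smul_mem' := by
        rintro c x ⟨P, hP, hl, hne', hx⟩
        exact ⟨P, hP, hl, hne', P.smul_mem c hx⟩ }
  have hUQ : U ≤ Q₀ := by
    rintro x ⟨P, hP, hl, hne', hx⟩
    exact prime_le_primary hR hM hP hl hne' hQ₀ hr hx
  have hQU : ¬ Q₀ ≤ U := by
    intro h
    have hUeq : U = Q₀ := le_antisymm hUQ h
    have hUprime : U.IsPrime := by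
      constructor
      · intro htop
        have : (1 : R) ∈ U := htop ▸ Submodule.mem_top
        rcases this with ⟨P, hP, hl, _, h1⟩
        exact hP.ne_top (Ideal.eq_top_iff_one _ |>.mpr h1)
      · rintro x y ⟨P, hP, hl, hne', hxy⟩
        rcases hP.mem_or_mem hxy with h' | h'
        · exact Or.inl ⟨P, hP, hl, hne', h'⟩
        · exact Or.inr ⟨P, hP, hl, hne', h'⟩
    apply hne
    rw [← hr, ← hUeq, hUprime.radical]
  rcases Set.not_subset.mp hQU with ⟨x, hxQ, hxU⟩
  refine ⟨x, ?_, hxQ, ?_⟩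
  · intro h
    exact hxU (h ▸ U.zero_mem)
  · intro P hP hl hx
    by_contra hne'
    exact hxU ⟨P, hP, hl, hne', hx⟩

/-- If `M` is sharp and branched, there is an invertible (hence finitely generated)
`M`-primary proper ideal. -/
theorem sharp_witness (hR : IsPrufer R) {M : Ideal R} (hM : M.IsMaximal)
    (hbr : ∃ Q : Ideal R, Q.IsPrimary ∧ Q.radical = M ∧ Q ≠ M)
    (hs : IsSharp R M) :
    ∃ Q : Ideal R, Q.IsPrimary ∧ Q.radical = M ∧ IsInvertibleIdeal R Q ∧ Q ≠ ⊤ := by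
  obtain ⟨Q₀, hQ₀, hr₀, hne₀⟩ := hbr
  obtain ⟨x, hx0, hxQ₀, hxP⟩ := exists_good_elt hR hM hQ₀ hr₀ hne₀
  obtain ⟨I, hIfg, hIM, hIsharp⟩ := hs
  set Q : Ideal R := I ⊔ Ideal.span {x} with hQdef
  have hxQ : x ∈ Q := Submodule.mem_sup_right (Ideal.subset_span (by simp))
  have hQbot : Q ≠ ⊥ := fun h => hx0 ((Submodule.eq_bot_iff _).mp h x hxQ)
  have hQfg : Q.FG := Submodule.FG.sup hIfg (Submodule.fg_span (Set.finite_singleton x))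
  have hQM : Q ≤ M := sup_le hIM (Ideal.span_le.mpr (by
      simp only [Set.singleton_subset_iff, SetLike.mem_coe]
      exact (hr₀ ▸ Ideal.le_radical) hxQ₀))
  have hrad : Q.radical = M := by
    apply le_antisymm
    · calc Q.radical ≤ M.radical := Ideal.radical_mono hQM
        _ = M := hM.isPrime.radical
    · rw [Ideal.radical_eq_sInf]
      apply le_sInf
      rintro J ⟨hQJ, hJprime⟩
      obtain ⟨N, hN, hJN⟩ := Ideal.exists_le_maximal J hJprime.ne_top
      have hMN : M ≤ N := hIsharp N hN (le_trans (le_trans le_sup_left hQJ) hJN)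
      have hNM : N = M := (hM.eq_of_le hN.ne_top hMN).symm
      have hJM : J ≤ M := hNM ▸ hJN
      have : J = M := hxP J hJprime hJM (hQJ hxQ)
      exact this ▸ le_refl M
  refine ⟨Q, ?_, hrad, hR Q hQbot hQfg, ?_⟩
  · exact Ideal.isPrimary_of_isMaximal_radical (hrad ▸ hM)
  · exact fun h => hM.ne_top (top_le_iff.mp (h ▸ hQM))

/-- If `M` is a maximal ideal that is not sharp, then `(R : Q) = R` for every
`M`-primary ideal `Q`. -/
theorem one_div_eq_one_of_not_sharp (hR : IsPrufer R) {M : Ideal R} (hM : M.IsMaximal)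
    (hMbot : M ≠ ⊥) (hns : ¬ IsSharp R M) {Q : Ideal R} (hQ : Q.IsPrimary)
    (hr : Q.radical = M) :
    (1 / (Q : FractionalIdeal (nonZeroDivisors R) K) : FractionalIdeal (nonZeroDivisors R) K)
      = 1 := by
  have hQbot : Q ≠ ⊥ := by
    intro h
    rw [h, Ideal.radical_eq_sInf] at hr
    apply hMbot
    rw [← hr]
    exact le_bot_iff.mp (sInf_le ⟨bot_le, Ideal.bot_prime⟩)
  have hQ0 : (Q : FractionalIdeal (nonZeroDivisors R) K) ≠ 0 := coeIdeal_ne_zero.mpr hQbot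
  apply le_antisymm
  · -- the hard inclusion 1/Q ≤ 1
    intro z hz
    by_contra hz1
    have hzmem : ∀ y ∈ (Q : FractionalIdeal (nonZeroDivisors R) K), z * y ∈
        (1 : FractionalIdeal (nonZeroDivisors R) K) :=
      (mem_div_iff_of_ne_zero hQ0).mp hz
    obtain ⟨a, b, hbmem, hab⟩ := IsFractionRing.div_surjective (A := R) (z : K)
    have hb0 : b ≠ 0 := nonZeroDivisors.ne_zero hbmem
    have hb0' : algebraMap R K b ≠ 0 := fun h => hb0 (inj (by rw [h, _root_.map_zero]))
    -- the conductor ideal J = (R : z) ∩ R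
    let J : Ideal R :=
      { carrier := {r | ∃ c : R, algebraMap R K c = z * algebraMap R K r}
        zero_mem' := ⟨0, by simp⟩
        add_mem' := by
          rintro r₁ r₂ ⟨c₁, hc₁⟩ ⟨c₂, hc₂⟩
          exact ⟨c₁ + c₂, by rw [_root_.map_add, _root_.map_add, mul_add, hc₁, hc₂]⟩
        smul_mem' := by
          rintro m r ⟨c, hc⟩
          refine ⟨m * c, ?_⟩
          rw [smul_eq_mul, _root_.map_mul, _root_.map_mul, hc]; ring }
    have hQJ : Q ≤ J := by
      intro q hq
      have : z * algebraMap R K q ∈ (1 : FractionalIdeal (nonZeroDivisors R) K) :=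
        hzmem _ ((mem_coeIdeal _).mpr ⟨q, hq, rfl⟩)
      rcases (mem_one_iff _).mp this with ⟨c, hc⟩
      exact ⟨c, hc⟩
    have hJtop : J ≠ ⊤ := by
      intro h
      have : (1 : R) ∈ J := h ▸ Submodule.mem_top
      rcases this with ⟨c, hc⟩
      rw [_root_.map_one, mul_one] at hc
      exact hz1 ((mem_one_iff _).mpr ⟨c, hc⟩)
    -- J is invertible, hence finitely generated
    set G : Ideal R := Ideal.span {a, b} with hGdef
    have hGbot : G ≠ ⊥ := by
      intro h
      exact hb0 ((Submodule.eq_bot_iff _).mp h b (Ideal.subset_span (by simp)))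
    have hGne : (G : FractionalIdeal (nonZeroDivisors R) K) ≠ 0 := coeIdeal_ne_zero.mpr hGbot
    have hGu : IsUnit (G : FractionalIdeal (nonZeroDivisors R) K) :=
      hR G hGbot (Submodule.fg_span (Set.toFinite _))
    have hGmul : (G : FractionalIdeal (nonZeroDivisors R) K) * (G : FractionalIdeal _ K)⁻¹ = 1 :=
      (mul_inv_cancel_iff_isUnit K).mpr hGu
    have hJeq : (J : FractionalIdeal (nonZeroDivisors R) K)
        = spanSingleton (nonZeroDivisors R) (algebraMap R K b)
          * (G : FractionalIdeal (nonZeroDivisors R) K)⁻¹ := by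
      apply le_antisymm
      · intro w hw
        rcases (mem_coeIdeal _).mp hw with ⟨r, hrJ, hrw⟩
        rcases hrJ with ⟨c, hc⟩
        apply mem_singleton_mul.mpr
        refine ⟨algebraMap R K r / algebraMap R K b, ?_, ?_⟩
        · apply (mem_inv_iff hGne).mpr
          intro y hy
          rcases (mem_coeIdeal _).mp hy with ⟨g, hgG, hgy⟩
          rcases Ideal.mem_span_pair.mp (by rwa [hGdef] at hgG) with ⟨c₁, c₂, hg⟩
          apply (mem_one_iff _).mpr
          refine ⟨c₁ * c + c₂ * r, ?_⟩
          rw [← hgy, ← hg, _root_.map_add, _root_.map_mul, _root_.map_mul,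
            _root_.map_add, _root_.map_mul, _root_.map_mul, hc, ← hab]
          field_simp
        · rw [← hrw]
          field_simp
      · intro w hw
        rcases mem_singleton_mul.mp hw with ⟨y, hy, hwy⟩
        have hyG := (mem_inv_iff hGne).mp hy
        have hbmemG : algebraMap R K b ∈ (G : FractionalIdeal (nonZeroDivisors R) K) :=
          (mem_coeIdeal _).mpr ⟨b, Ideal.subset_span (by simp), rfl⟩
        have hamemG : algebraMap R K a ∈ (G : FractionalIdeal (nonZeroDivisors R) K) :=
          (mem_coeIdeal _).mpr ⟨a, Ideal.subset_span (by simp), rfl⟩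
        rcases (mem_one_iff _).mp (hyG _ hbmemG) with ⟨r, hr⟩
        rcases (mem_one_iff _).mp (hyG _ hamemG) with ⟨c, hcc⟩
        apply (mem_coeIdeal _).mpr
        refine ⟨r, ⟨c, ?_⟩, ?_⟩
        · rw [hcc, hr, ← hab]
          field_simp
        · rw [hr, hwy]; ring
    have hJu : IsUnit (J : FractionalIdeal (nonZeroDivisors R) K) := by
      rw [hJeq]
      apply IsUnit.mul
      · exact isUnit_iff_exists_inv.mpr ⟨spanSingleton (nonZeroDivisors R) (algebraMap R K b)⁻¹,
          by rw [spanSingleton_mul_spanSingleton, mul_inv_cancel₀ hb0', spanSingleton_one]⟩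
      · exact isUnit_iff_exists_inv.mpr ⟨(G : FractionalIdeal (nonZeroDivisors R) K),
          by rw [mul_comm]; exact hGmul⟩
    have hJfg : J.FG := Ideal.fg_of_isUnit inj J hJu
    -- J witnesses sharpness of M, contradiction
    apply hns
    obtain ⟨N, hN, hJN⟩ := Ideal.exists_le_maximal J hJtop
    have key : ∀ N' : Ideal R, N'.IsMaximal → J ≤ N' → M ≤ N' := by
      intro N' hN' hJN'
      calc M = Q.radical := hr.symm
        _ ≤ N'.radical := Ideal.radical_mono (le_trans hQJ hJN')
        _ = N' := hN'.isPrime.radical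
    have hNM : N = M := (hM.eq_of_le hN.ne_top (key N hN hJN)).symm
    exact ⟨J, hJfg, hNM ▸ hJN, key⟩
  · -- easy inclusion 1 ≤ 1/Q
    apply (le_div_iff_of_ne_zero hQ0).mpr
    intro x hx y hy
    rcases (mem_one_iff _).mp hx with ⟨r, hr⟩
    rcases (mem_coeIdeal _).mp hy with ⟨q, _, hq⟩
    exact (mem_one_iff _).mpr ⟨r * q, by rw [_root_.map_mul, hr, hq]⟩

end Aux

/-- For a branched nondivisorial maximal ideal `M` of a Prüfer domain: `M` is not sharp
iff no `M`-primary ideal is divisorial, iff `(R:Q) = R` for every `M`-primary ideal `Q`. -/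
theorem not_sharp_iff_no_divisorial_primary (R : Type*) [CommRing R] [IsDomain R]
    (hR : IsPrufer R) (M : Ideal R) (hM : M.IsMaximal)
    (hbr : ∃ Q : Ideal R, Q.IsPrimary ∧ Q.radical = M ∧ Q ≠ M)
    (hnd : ¬ IsDivisorial R M) :
    ((¬ IsSharp R M) ↔
      ∀ Q : Ideal R, Q.IsPrimary → Q.radical = M → ¬ IsDivisorial R Q) ∧
    ((¬ IsSharp R M) ↔
      ∀ Q : Ideal R, Q.IsPrimary → Q.radical = M →
        (1 / (Q : FractionalIdeal (nonZeroDivisors R) (FractionRing R)) = 1)) := by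
  have hMbot : M ≠ ⊥ := by
    obtain ⟨Q₀, hQ₀, hr₀, hne₀⟩ := hbr
    intro h
    apply hne₀
    have : Q₀ ≤ M := hr₀ ▸ Ideal.le_radical
    rw [h] at this ⊢
    exact le_bot_iff.mp this
  -- the condition (R : Q) = R for all M-primary Q
  have hAC : ¬ IsSharp R M → ∀ Q : Ideal R, Q.IsPrimary → Q.radical = M →
      (1 / (Q : FractionalIdeal (nonZeroDivisors R) (FractionRing R)) = 1) :=
    fun hns Q hQ hr => one_div_eq_one_of_not_sharp hR hM hMbot hns hQ hr
  -- (R : Q) = 1 implies Q not divisorial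
  have hCB : (∀ Q : Ideal R, Q.IsPrimary → Q.radical = M →
      (1 / (Q : FractionalIdeal (nonZeroDivisors R) (FractionRing R)) = 1)) →
      ∀ Q : Ideal R, Q.IsPrimary → Q.radical = M → ¬ IsDivisorial R Q := by
    intro hC Q hQ hr hdiv
    have h1 := hC Q hQ hr
    unfold IsDivisorial at hdiv
    rw [h1, FractionalIdeal.div_one] at hdiv
    have : Q = ⊤ := by
      rw [← Ideal.one_eq_top]
      exact FractionalIdeal.coeIdeal_eq_one.mp hdiv.symm
    have hQM : Q ≤ M := hr ▸ Ideal.le_radical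
    exact hM.ne_top (top_le_iff.mp (this ▸ hQM))
  -- sharp gives an invertible M-primary ideal, which is divisorial with (R:Q) ≠ 1
  have hSharpWitness : IsSharp R M → ∃ Q : Ideal R, Q.IsPrimary ∧ Q.radical = M ∧
      IsDivisorial R Q ∧
      (1 / (Q : FractionalIdeal (nonZeroDivisors R) (FractionRing R)) ≠ 1) := by
    intro hs
    obtain ⟨Q, hQ, hr, hu, htop⟩ := sharp_witness hR hM hbr hs
    have hmul : (Q : FractionalIdeal (nonZeroDivisors R) (FractionRing R))
        * (Q : FractionalIdeal (nonZeroDivisors R) (FractionRing R))⁻¹ = 1 :=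
      (FractionalIdeal.mul_inv_cancel_iff_isUnit (FractionRing R)).mpr hu
    have hinv : (Q : FractionalIdeal (nonZeroDivisors R) (FractionRing R))⁻¹
        = 1 / (Q : FractionalIdeal (nonZeroDivisors R) (FractionRing R)) :=
      FractionalIdeal.inv_eq (FractionRing R)
    refine ⟨Q, hQ, hr, ?_, ?_⟩
    · unfold IsDivisorial
      have h2 := FractionalIdeal.right_inverse_eq (FractionRing R)
        ((Q : FractionalIdeal (nonZeroDivisors R) (FractionRing R))⁻¹)
        (Q : FractionalIdeal (nonZeroDivisors R) (FractionRing R))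
        (by rw [mul_comm]; exact hmul)
      have h3 : ((Q : FractionalIdeal (nonZeroDivisors R) (FractionRing R))⁻¹)⁻¹
          = 1 / (Q : FractionalIdeal (nonZeroDivisors R) (FractionRing R))⁻¹ :=
        FractionalIdeal.inv_eq (FractionRing R)
      rw [← hinv, ← h3]
      exact h2.symm
    · intro h
      rw [← hinv] at h
      rw [h, mul_one] at hmul
      have hQ1 : Q = (1 : Ideal R) := FractionalIdeal.coeIdeal_eq_one.mp hmul
      exact htop (by rw [hQ1, Ideal.one_eq_top])
  constructor
  · constructor
    · intro hA
      exact hCB (hAC hA)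
    · intro hB hs
      obtain ⟨Q, hQ, hr, hdiv, _⟩ := hSharpWitness hs
      exact hB Q hQ hr hdiv
  · constructor
    · exact hAC
    · intro hC hs
      obtain ⟨Q, hQ, hr, _, hne⟩ := hSharpWitness hs
      exact hne (hC Q hQ hr)
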